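/- If G is an abelian group with rank G ≠ corank G, then corank G is finite, say equal to n, and G ≅ ℤ^n ⊕ H where corank H = 0 and rank H = rank G − n. -/

import Mathlib

/-- The corank of an abelian group `G`: the supremum of the natural numbers `n` such that
there exists a surjective group homomorphism from `G` onto `ℤ^n`. -/
noncomputable def corank (G : Type) [AddCommGroup G] : ℕ∞ :=
  sSup {c : ℕ∞ | ∃ n : ℕ, c = (n : ℕ∞) ∧
    ∃ f : G →+ (Fin n → ℤ), Function.Surjective f}

/-- The (torsion-free) rank of an abelian group `G`: the supremum of the natural numbers `n`
such that there exists an injective group homomorphism from `ℤ^n` into `G`. -/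
noncomputable def rank (G : Type) [AddCommGroup G] : ℕ∞ :=
  sSup {c : ℕ∞ | ∃ n : ℕ, c = (n : ℕ∞) ∧
    ∃ f : (Fin n → ℤ) →+ G, Function.Injective f}

/- ### Auxiliary material -/

open TensorProduct

instance : Module.Flat ℤ ℚ := IsLocalization.flat _ (nonZeroDivisors ℤ)

/-- The rational rank of an abelian group, as a cardinal. -/
noncomputable abbrev qrank (G : Type) [AddCommGroup G] : Cardinal :=
  Module.rank ℚ (ℚ ⊗[ℤ] G)

section Aux

variable {G : Type} [AddCommGroup G]

lemma one_tmul_int_smul (m : ℤ) (g : G) :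
    (1 : ℚ) ⊗ₜ[ℤ] (m • g) = (m : ℚ) • ((1 : ℚ) ⊗ₜ[ℤ] g) := by
  rw [tmul_smul, Int.cast_smul_eq_zsmul]

lemma exists_smul_eq_one_tmul (x : ℚ ⊗[ℤ] G) :
    ∃ d : ℕ, d ≠ 0 ∧ ∃ g : G, (d : ℚ) • x = (1 : ℚ) ⊗ₜ[ℤ] g := by
  induction x using TensorProduct.induction_on with
  | zero => exact ⟨1, one_ne_zero, 0, by simp⟩
  | tmul q g =>
      refine ⟨q.den, q.den_nz, q.num • g, ?_⟩
      rw [one_tmul_int_smul, smul_tmul', smul_tmul', smul_eq_mul, smul_eq_mul, mul_one]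
      congr 1
      have hd : (q.den : ℚ) ≠ 0 := by exact_mod_cast q.den_nz
      field_simp
      rw [mul_comm, Rat.mul_den_eq_num]
  | add x y hx hy =>
      obtain ⟨d1, h1, g1, e1⟩ := hx
      obtain ⟨d2, h2, g2, e2⟩ := hy
      refine ⟨d1 * d2, mul_ne_zero h1 h2, (d2 : ℤ) • g1 + (d1 : ℤ) • g2, ?_⟩
      rw [tmul_add, one_tmul_int_smul, one_tmul_int_smul, smul_add]
      push_cast
      rw [← e1, ← e2, smul_smul, smul_smul, mul_comm (d1:ℚ) (d2:ℚ)]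

lemma le_qrank_of_inj (k : ℕ) (f : (Fin k → ℤ) →+ G) (hf : Function.Injective f) :
    (k : Cardinal) ≤ qrank G := by
  have hinj : Function.Injective (f.toIntLinearMap.baseChange ℚ) := by
    rw [LinearMap.baseChange_eq_ltensor]
    exact Module.Flat.lTensor_preserves_injective_linearMap _ hf
  have := LinearMap.rank_le_of_injective _ hinj
  rwa [Module.rank_baseChange, rank_fin_fun, Cardinal.lift_natCast] at this

lemma exists_inj_of_le_qrank (k : ℕ) (hk : (k : Cardinal) ≤ qrank G) :
    ∃ f : (Fin k → ℤ) →+ G, Function.Injective f := by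
  obtain ⟨s, hcard, hli⟩ := le_rank_iff_exists_linearIndependent_finset.mp hk
  let e : Fin k ≃ {x // x ∈ s} := (hcard ▸ s.equivFin).symm
  have hw : LinearIndependent ℚ fun i : Fin k => ((e i : ℚ ⊗[ℤ] G)) :=
    hli.comp e e.injective
  set w : Fin k → ℚ ⊗[ℤ] G := fun i => (e i : ℚ ⊗[ℤ] G) with hwdef
  choose d hd g hg using fun i : Fin k => exists_smul_eq_one_tmul (w i)
  have hu : LinearIndependent ℚ fun i : Fin k => (1 : ℚ) ⊗ₜ[ℤ] (g i) := by
    have := hw.units_smul fun i => Units.mk0 ((d i : ℚ))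
      (by exact_mod_cast hd i)
    convert this using 1
    funext i
    rw [← hg i]
    rfl
  refine ⟨{ toFun := fun x => ∑ i, x i • g i
            map_zero' := by simp
            map_add' := by
              intro x y
              simp [add_smul, Finset.sum_add_distrib] }, ?_⟩
  rw [injective_iff_map_eq_zero]
  intro x hx
  simp only [AddMonoidHom.coe_mk, ZeroHom.coe_mk] at hx
  have h2 : ∑ i, (x i) • ((1 : ℚ) ⊗ₜ[ℤ] (g i)) = 0 := by
    have := congrArg (fun z => (1 : ℚ) ⊗ₜ[ℤ] z) hx
    simpa [tmul_sum, tmul_smul] using this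
  have h2' : ∑ i, ((x i : ℚ)) • ((1 : ℚ) ⊗ₜ[ℤ] (g i)) = 0 := by
    simp only [Int.cast_smul_eq_zsmul]; exact h2
  have h3 := Fintype.linearIndependent_iff.mp hu (fun i => (x i : ℚ)) h2'
  funext i
  simp only [Pi.zero_apply]
  exact_mod_cast show ((x i : ℚ)) = 0 from h3 i

/-- `rank` is the truncation of `qrank` to `ℕ∞`. -/
lemma rank_eq_toENat_qrank (G : Type) [AddCommGroup G] :
    rank G = Cardinal.toENat (qrank G) := by
  have hmem : ∀ c : ℕ∞, (c ∈ {c : ℕ∞ | ∃ n : ℕ, c = (n : ℕ∞) ∧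
      ∃ f : (Fin n → ℤ) →+ G, Function.Injective f}) ↔
      ∃ n : ℕ, c = (n : ℕ∞) ∧ (n : ℕ∞) ≤ Cardinal.toENat (qrank G) := by
    intro c
    constructor
    · rintro ⟨n, rfl, f, hf⟩
      refine ⟨n, rfl, ?_⟩
      have := le_qrank_of_inj n f hf
      simpa using (Cardinal.toENat).monotone' this
    · rintro ⟨n, rfl, hle⟩
      refine ⟨n, rfl, exists_inj_of_le_qrank n ?_⟩
      have := Cardinal.enat_gc.l_le (α := ℕ∞) hle
      simpa using this
  rw [rank]
  rw [Set.ext hmem]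
  -- now a pure `ℕ∞` computation
  generalize Cardinal.toENat (qrank G) = t
  apply le_antisymm
  · exact sSup_le (by rintro c ⟨n, rfl, hn⟩; exact hn)
  · cases t with
    | top =>
        change ⊤ ≤ sSup {x : ℕ∞ | ∃ n : ℕ, x = ↑n ∧ (n : ℕ∞) ≤ ⊤}
        rw [top_le_iff, sSup_eq_top]
        intro b hb
        lift b to ℕ using hb.ne
        exact ⟨(b + 1 : ℕ), ⟨b + 1, rfl, le_top⟩, by exact_mod_cast Nat.lt_succ_self b⟩
    | coe m => exact le_sSup ⟨m, rfl, le_rfl⟩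

/-- ranks over ℚ transfer along additive equivalences of `ℚ`-vector spaces. -/
lemma rank_eq_of_addEquiv {V W : Type} [AddCommGroup V] [AddCommGroup W]
    [Module ℚ V] [Module ℚ W] (e : V ≃+ W) : Module.rank ℚ V = Module.rank ℚ W :=
  (e.toLinearEquiv (fun c x => map_rat_smul e.toAddMonoidHom c x)).rank_eq

lemma qrank_congr {A B : Type} [AddCommGroup A] [AddCommGroup B] (e : A ≃+ B) :
    qrank A = qrank B :=
  rank_eq_of_addEquiv (LinearEquiv.baseChange ℤ ℚ A B e.toIntLinearEquiv).toAddEquiv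

lemma qrank_prod {A B : Type} [AddCommGroup A] [AddCommGroup B] :
    qrank (A × B) = qrank A + qrank B := by
  rw [show qrank (A × B) = Module.rank ℚ ((ℚ ⊗[ℤ] A) × (ℚ ⊗[ℤ] B)) from
    rank_eq_of_addEquiv (TensorProduct.prodRight ℤ ℚ ℚ A B).toAddEquiv]
  exact rank_prod'

lemma qrank_zpow (n : ℕ) : qrank (Fin n → ℤ) = n := by
  rw [qrank, Module.rank_baseChange, rank_fin_fun, Cardinal.lift_natCast]

lemma rank_prod_zpow {H : Type} [AddCommGroup H] (G : Type) [AddCommGroup G] (n : ℕ)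
    (e : G ≃+ ((Fin n → ℤ) × H)) : rank G = (n : ℕ∞) + rank H := by
  rw [rank_eq_toENat_qrank, rank_eq_toENat_qrank, qrank_congr e, qrank_prod, qrank_zpow,
    map_add, map_natCast]

end Aux

lemma corank_le_rank (G : Type) [AddCommGroup G] : corank G ≤ rank G := by
  apply sSup_le
  rintro c ⟨k, rfl, f, hf⟩
  obtain ⟨s, hs⟩ := Module.projective_lifting_property f.toIntLinearMap LinearMap.id hf
  have hsx : ∀ x, f.toIntLinearMap (s x) = x := fun x => LinearMap.ext_iff.mp hs x
  have hsinj : Function.Injective s := Function.LeftInverse.injective hsx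
  exact le_sSup ⟨k, rfl, s.toAddMonoidHom, hsinj⟩

theorem decomposition_of_rank_ne_corank (G : Type) [AddCommGroup G]
    (h : rank G ≠ corank G) :
    ∃ n : ℕ, corank G = (n : ℕ∞) ∧
      ∃ (H : Type) (_i : AddCommGroup H),
        Nonempty (G ≃+ ((Fin n → ℤ) × H)) ∧ corank H = 0 ∧ rank H = rank G - n := by
  have hcr := corank_le_rank G
  -- the corank is finite
  have hne : corank G ≠ ⊤ := by
    intro ht
    exact h (le_antisymm (ht ▸ le_top) (ht ▸ ht ▸ hcr))
  obtain ⟨n, hn⟩ : ∃ n : ℕ, corank G = (n : ℕ∞) :=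
    ⟨(corank G).toNat, (ENat.coe_toNat hne).symm⟩
  refine ⟨n, hn, ?_⟩
  set S := {c : ℕ∞ | ∃ k : ℕ, c = (k : ℕ∞) ∧
    ∃ f : G →+ (Fin k → ℤ), Function.Surjective f} with hS
  have h0 : (0 : ℕ∞) ∈ S :=
    ⟨0, by norm_num, 0, fun y => ⟨0, Subsingleton.elim _ _⟩⟩
  have hfin : S.Finite := by
    apply Set.Finite.subset (Finset.finite_toSet
      ((Finset.range (n+1)).image (Nat.cast : ℕ → ℕ∞)))
    rintro c hc
    have hcle : c ≤ (n : ℕ∞) := le_trans (le_sSup hc) (le_of_eq hn)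
    obtain ⟨j, rfl, _⟩ := hc
    simp only [Finset.coe_image, Set.mem_image, Finset.mem_coe, Finset.mem_range]
    exact ⟨j, Nat.lt_succ_of_le (by exact_mod_cast hcle), rfl⟩
  have hmem : (n : ℕ∞) ∈ S := by
    rw [← hn]
    exact Set.Nonempty.csSup_mem ⟨0, h0⟩ hfin
  obtain ⟨k, hk, f, hf⟩ := hmem
  have hkn : k = n := by exact_mod_cast hk.symm
  subst hkn
  -- split off the free part
  obtain ⟨s, hs⟩ := Module.projective_lifting_property f.toIntLinearMap LinearMap.id hf
  have hsx : ∀ x, f (s x) = x := fun x => LinearMap.ext_iff.mp hs x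
  set H := ↥(LinearMap.ker f.toIntLinearMap) with hH
  have e : G ≃+ ((Fin k → ℤ) × H) :=
    { toFun := fun g => (f g, ⟨g - s (f g), by
        rw [LinearMap.mem_ker]
        show f (g - s (f g)) = 0
        rw [map_sub, hsx, sub_self]⟩)
      invFun := fun p => s p.1 + (p.2 : G)
      left_inv := fun g => by simp
      right_inv := fun p => by
        obtain ⟨x, y⟩ := p
        have hy : f (y : G) = 0 := y.2
        refine Prod.ext ?_ (Subtype.ext ?_) <;>
          simp [map_add, hsx, hy]
      map_add' := fun a b => by
        refine Prod.ext ?_ (Subtype.ext ?_)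
        · simp [map_add]
        · show a + b - s (f (a + b)) = (a - s (f a)) + (b - s (f b))
          simp only [map_add]
          abel }
  refine ⟨H, inferInstance, ⟨e⟩, ?_, ?_⟩
  · -- corank H = 0
    refine le_antisymm ?_ zero_le
    apply sSup_le
    rintro c ⟨m, rfl, p, hp⟩
    suffices hm : m = 0 by simp [hm]
    by_contra hm
    -- build a surjection G →+ ℤ^(k+m)
    have E3 : ((Fin k → ℤ) × (Fin m → ℤ)) ≃+ (Fin (k+m) → ℤ) :=
      ((LinearEquiv.sumArrowLequivProdArrow (Fin k) (Fin m) ℤ ℤ).symm.trans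
        (LinearEquiv.funCongrLeft ℤ ℤ finSumFinEquiv.symm)).toAddEquiv
    set F : G →+ (Fin (k+m) → ℤ) :=
      E3.toAddMonoidHom.comp
        (((AddMonoidHom.id (Fin k → ℤ)).prodMap p).comp e.toAddMonoidHom) with hF
    have hFsurj : Function.Surjective F := by
      intro y
      obtain ⟨z, hz⟩ := Function.Surjective.prodMap
        (Function.surjective_id (α := Fin k → ℤ)) hp (E3.symm y)
      obtain ⟨g, hg⟩ := e.surjective z
      refine ⟨g, ?_⟩
      show E3 ((AddMonoidHom.id (Fin k → ℤ)).prodMap p (e g)) = y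
      have : (AddMonoidHom.id (Fin k → ℤ)).prodMap p (e g) = E3.symm y := by
        rw [hg]
        exact hz
      rw [this, AddEquiv.apply_symm_apply]
    have hle : ((k + m : ℕ) : ℕ∞) ≤ corank G := le_sSup ⟨k + m, rfl, F, hFsurj⟩
    rw [hn] at hle
    have : k + m ≤ k := by exact_mod_cast hle
    omega
  · -- rank H = rank G - k
    have hr : rank G = (k : ℕ∞) + rank H := rank_prod_zpow G k e
    rw [hr]
    exact ((ENat.addLECancellable_of_ne_top
      (WithTop.natCast_ne_top k)).add_tsub_cancel_left).symm
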